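/- Let ξ₁, …, ξₙ be i.i.d. Bernoulli(p), 0 < p < 1, with cyclic convention, V₁ := Σ_i (ξ_i - p), V₂ := Σ_i (ξ_i ξ_{i+1} - p²). Construct (ξ'₁, …, ξ'ₙ) by choosing I uniformly in {1,…,n} and replacing ξ_I with an independent copy; let V'₁, V'₂ be the corresponding statistics. Then E[V'₁ - V₁ | ξ] = -(1/n) V₁ and E[V'₂ - V₂ | ξ] = -(2/n) V₂ + (2p/n) V₁. -/

import Mathlib

open MeasureTheory ProbabilityTheory

/-- The Bernoulli(p) distribution on ℝ, placing mass `p` at `1` and `1-p` at `0`. -/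
noncomputable def bernMeasure (p : ℝ) : Measure ℝ :=
  ENNReal.ofReal p • Measure.dirac (1 : ℝ) + ENNReal.ofReal (1 - p) • Measure.dirac 0

/-- The probability space carrying an i.i.d. Bernoulli(p) sequence `ω.1`, an independent
i.i.d. Bernoulli(p) sequence of fresh copies `ω.2.1`, and an independent uniform index
`ω.2.2`. -/
noncomputable def resampleMeasure (n : ℕ) [NeZero n] (p : ℝ) :
    Measure ((Fin n → ℝ) × (Fin n → ℝ) × Fin n) :=
  (Measure.pi fun _ : Fin n => bernMeasure p).prod
    ((Measure.pi fun _ : Fin n => bernMeasure p).prod (PMF.uniformOfFintype (Fin n)).toMeasure)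

section Helpers


lemma bern_isProb {p : ℝ} (hp0 : 0 ≤ p) (hp1 : p ≤ 1) :
    IsProbabilityMeasure (bernMeasure p) := by
  constructor
  simp only [bernMeasure, Measure.add_apply, Measure.smul_apply, smul_eq_mul,
    measure_univ, mul_one]
  rw [← ENNReal.ofReal_add hp0 (by linarith)]
  norm_num

lemma bern_ae (p : ℝ) : ∀ᵐ x ∂bernMeasure p, x = 0 ∨ x = 1 := by
  rw [ae_iff]
  have hS : MeasurableSet {x : ℝ | ¬(x = 0 ∨ x = 1)} := by
    have : {x : ℝ | ¬(x = 0 ∨ x = 1)} = ({0, 1} : Set ℝ)ᶜ := by ext x; simp only [Set.mem_setOf_eq, Set.mem_compl_iff, Set.mem_insert_iff, Set.mem_singleton_iff]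
    rw [this]
    exact (Set.Finite.measurableSet (by simp)).compl
  simp only [bernMeasure, Measure.add_apply, Measure.smul_apply, smul_eq_mul]
  rw [Measure.dirac_apply' _ hS, Measure.dirac_apply' _ hS]
  simp

lemma bern_integrable {p : ℝ} (hp0 : 0 ≤ p) (hp1 : p ≤ 1) {g : ℝ → ℝ} (hg : Measurable g) :
    Integrable g (bernMeasure p) := by
  haveI := bern_isProb hp0 hp1
  refine Integrable.mono' (integrable_const (|g 0| + |g 1|))
    hg.aestronglyMeasurable ?_
  filter_upwards [bern_ae p] with x hx
  rcases hx with rfl | rfl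
  · simpa [Real.norm_eq_abs] using le_add_of_nonneg_right (abs_nonneg (g 1))
  · simpa [Real.norm_eq_abs] using le_add_of_nonneg_left (abs_nonneg (g 0))

lemma bern_integral {p : ℝ} (hp0 : 0 < p) (hp1 : p < 1) {g : ℝ → ℝ} (hg : Measurable g) :
    ∫ x, g x ∂bernMeasure p = p * g 1 + (1 - p) * g 0 := by
  have h1 : Integrable g (Measure.dirac (1 : ℝ)) := by
    refine (integrable_const (g 1)).congr ?_
    rw [Filter.eventuallyEq_comm, MeasureTheory.ae_dirac_eq]
    exact Filter.eventually_pure.mpr rfl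
  have h0 : Integrable g (Measure.dirac (0 : ℝ)) := by
    refine (integrable_const (g 0)).congr ?_
    rw [Filter.eventuallyEq_comm, MeasureTheory.ae_dirac_eq]
    exact Filter.eventually_pure.mpr rfl
  rw [bernMeasure, integral_add_measure, integral_smul_measure, integral_smul_measure,
    integral_dirac, integral_dirac, ENNReal.toReal_ofReal hp0.le,
    ENNReal.toReal_ofReal (by linarith : (0:ℝ) ≤ 1 - p)]
  · simp [smul_eq_mul]
  · exact (integrable_smul_measure (by simp [hp0]) (by simp)).mpr h1
  · exact (integrable_smul_measure (by simp; linarith) (by simp)).mpr h0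

lemma meas_apply {γ : Type*} [MeasurableSpace γ] {n : ℕ} {F : γ → Fin n → ℝ} {J : γ → Fin n}
    (hF : Measurable F) (hJ : Measurable J) : Measurable fun c => F c (J c) := by
  classical
  have h : (fun c => F c (J c)) = fun c => ∑ j : Fin n, if J c = j then F c j else 0 := by
    funext c
    rw [Finset.sum_eq_single (J c) (fun b _ hb => if_neg (Ne.symm hb)) (by simp)]
    simp
  rw [h]
  refine Finset.measurable_sum _ fun j _ => Measurable.ite ?_ ((measurable_pi_apply j).comp hF)
    measurable_const
  exact hJ (measurableSet_singleton j)

lemma pi_eval {E : Type*} [MeasurableSpace E] (μ : Measure E) [IsProbabilityMeasure μ]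
    {ι : Type*} [Fintype ι] {g : E → ℝ} (hg : Integrable g μ) (j : ι) :
    Integrable (fun x : ι → E => g (x j)) (Measure.pi fun _ => μ) ∧
      ∫ x : ι → E, g (x j) ∂(Measure.pi fun _ => μ) = ∫ x, g x ∂μ := by
  classical
  letI : MeasureSpace E := ⟨μ⟩
  haveI : IsProbabilityMeasure (volume : Measure E) := ‹IsProbabilityMeasure μ›
  set f : ι → E → ℝ := fun i e => if i = j then g e else 1 with hf
  have hfg : (fun x : ι → E => g (x j)) = fun x => ∏ i, f i (x i) := by
    funext x
    rw [Finset.prod_eq_single j (fun b _ hb => if_neg hb) (by simp)]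
    simp [hf]
  have hint : ∀ i, Integrable (f i) volume := by
    intro i
    by_cases h : i = j
    · subst h; simp only [hf, if_pos rfl]; exact hg
    · simpa [hf, h] using (integrable_const (1:ℝ))
  constructor
  · rw [hfg]
    exact Integrable.fintype_prod hint
  · rw [hfg]
    have h2 : ∫ x : ι → E, ∏ i, f i (x i) ∂(volume : Measure (ι → E)) = ∏ i, ∫ e, f i e ∂(volume : Measure E) :=
      MeasureTheory.integral_fintype_prod_eq_prod (𝕜 := ℝ) f
    rw [show (Measure.pi fun _ : ι => μ) = (volume : Measure (ι → E)) from rfl]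
    rw [h2, Finset.prod_eq_single j (fun b _ hb => by simp [hf, hb]) (by simp)]
    simp only [hf, if_pos rfl]
    rfl

lemma condexp_fst {α β : Type*} [MeasurableSpace α] [MeasurableSpace β]
    (μ : Measure α) (ν : Measure β) [IsProbabilityMeasure μ] [IsProbabilityMeasure ν]
    {f : α × β → ℝ} (hsm : StronglyMeasurable f) (hf : Integrable f (μ.prod ν)) :
    (μ.prod ν)[f | MeasurableSpace.comap Prod.fst inferInstance]
      =ᵐ[μ.prod ν] fun ω => ∫ y, f (ω.1, y) ∂ν := by
  have hm : MeasurableSpace.comap (Prod.fst : α × β → α) inferInstance ≤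
      (inferInstance : MeasurableSpace (α × β)) := measurable_iff_comap_le.mp measurable_fst
  set G : α → ℝ := fun x => ∫ y, f (x, y) ∂ν with hG
  have G_sm : StronglyMeasurable G := hsm.integral_prod_right'
  have G_int : Integrable G μ := hf.integral_prod_left
  have hmap : Measure.map Prod.fst (μ.prod ν) = μ := by
    rw [Measure.map_fst_prod]; simp
  have Gf_int : Integrable (fun ω : α × β => G ω.1) (μ.prod ν) := by
    rw [← hmap] at G_int
    exact (integrable_map_measure G_sm.aestronglyMeasurable
      measurable_fst.aemeasurable).mp G_int
  refine (ae_eq_condExp_of_forall_setIntegral_eq hm hf ?_ ?_ ?_).symm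
  · intro s _ _
    exact Gf_int.integrableOn
  · rintro s ⟨t, ht, rfl⟩ -
    rw [← Set.prod_univ]
    rw [setIntegral_prod _ hf.integrableOn, setIntegral_prod _ Gf_int.integrableOn]
    simp only [Measure.restrict_univ, integral_const, measure_univ, probReal_univ, ENNReal.toReal_one, one_smul, hG]
  · exact ⟨fun ω => G ω.1,
      G_sm.comp_measurable (measurable_iff_comap_le.mpr le_rfl), Filter.EventuallyEq.rfl⟩

lemma fin_one_ne_zero {n : ℕ} [NeZero n] (hn : 3 ≤ n) : (1 : Fin n) ≠ 0 := by
  intro h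
  have := congrArg Fin.val h
  rw [Fin.val_one', Nat.mod_eq_of_lt (by omega)] at this
  simp at this

lemma key1 {n : ℕ} [NeZero n] (p : ℝ) (x : Fin n → ℝ) (c : ℝ) (j : Fin n) :
    (∑ i, (Function.update x j c i - p)) - ∑ i, (x i - p) = c - x j := by
  classical
  simp only [Finset.sum_sub_distrib]
  rw [Finset.sum_update_of_mem (Finset.mem_univ j), ← Finset.add_sum_erase _ x (Finset.mem_univ j),
    Finset.sdiff_singleton_eq_erase]
  ring

lemma key2 {n : ℕ} [NeZero n] (hn : 3 ≤ n) (p : ℝ) (x : Fin n → ℝ) (c : ℝ) (j : Fin n) :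
    (∑ i : Fin n, (Function.update x j c i * Function.update x j c (i + 1) - p ^ 2))
      - ∑ i : Fin n, (x i * x (i + 1) - p ^ 2)
    = (c - x j) * (x (j + 1) + x (j - 1)) := by
  classical
  have h10 : (1 : Fin n) ≠ 0 := fin_one_ne_zero hn
  have hj1 : j - 1 ≠ j := by
    intro h
    apply h10
    have := sub_eq_iff_eq_add.mp h
    nth_rewrite 1 [← add_zero j] at this
    exact (add_left_cancel this).symm
  have hj2 : j + 1 ≠ j := by
    intro h
    apply h10
    nth_rewrite 2 [← add_zero j] at h
    exact add_left_cancel h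
  set u := Function.update x j c with hu
  have hdiff : (∑ i : Fin n, (u i * u (i + 1) - p ^ 2)) - ∑ i : Fin n, (x i * x (i + 1) - p ^ 2)
      = ∑ i : Fin n, (u i * u (i + 1) - x i * x (i + 1)) := by
    simp only [Finset.sum_sub_distrib]
    ring
  rw [hdiff]
  have hzero : ∀ i ∈ Finset.univ, i ∉ ({j - 1, j} : Finset (Fin n)) →
      u i * u (i + 1) - x i * x (i + 1) = 0 := by
    intro i _ hi
    simp only [Finset.mem_insert, Finset.mem_singleton, not_or] at hi
    have h1 : u i = x i := Function.update_of_ne hi.2 _ _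
    have h2 : u (i + 1) = x (i + 1) := by
      refine Function.update_of_ne (fun h => hi.1 ?_) _ _
      exact eq_sub_of_add_eq h
    rw [h1, h2, sub_self]
  rw [← Finset.sum_subset (Finset.subset_univ ({j - 1, j} : Finset (Fin n))) hzero,
    Finset.sum_pair hj1]
  have e1 : u (j - 1) = x (j - 1) := Function.update_of_ne hj1 _ _
  have e2 : u (j - 1 + 1) = c := by rw [sub_add_cancel]; exact Function.update_self _ _ _
  have e3 : u j = c := Function.update_self _ _ _
  have e4 : u (j + 1) = x (j + 1) := Function.update_of_ne hj2 _ _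
  rw [e1, e2, e3, e4, sub_add_cancel]
  ring

open Function

lemma ae_fst_of {α β : Type*} [MeasurableSpace α] [MeasurableSpace β] {μ : Measure α}
    {ν : Measure β} [SFinite μ] [SFinite ν] {Q : α → Prop} (h : ∀ᵐ x ∂μ, Q x) :
    ∀ᵐ ω ∂μ.prod ν, Q ω.1 := by
  rw [ae_iff] at h ⊢
  have hset : {ω : α × β | ¬ Q ω.1} = {x | ¬ Q x} ×ˢ Set.univ := by
    rw [Set.prod_univ]; rfl
  rw [hset, Measure.prod_prod, h, zero_mul]

lemma ae_snd_of {α β : Type*} [MeasurableSpace α] [MeasurableSpace β] {μ : Measure α}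
    {ν : Measure β} [SFinite μ] [SFinite ν] {Q : β → Prop} (h : ∀ᵐ y ∂ν, Q y) :
    ∀ᵐ ω ∂μ.prod ν, Q ω.2 := by
  rw [ae_iff] at h ⊢
  have hset : {ω : α × β | ¬ Q ω.2} = Set.univ ×ˢ {y | ¬ Q y} := by
    rw [Set.univ_prod]; rfl
  rw [hset, Measure.prod_prod, h, mul_zero]

instance bernMeasure.isFiniteMeasure (p : ℝ) : IsFiniteMeasure (bernMeasure p) := by
  constructor
  simp only [bernMeasure, Measure.add_apply, Measure.smul_apply, smul_eq_mul, measure_univ,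
    mul_one]
  exact ENNReal.add_lt_top.mpr ⟨ENNReal.ofReal_lt_top, ENNReal.ofReal_lt_top⟩

lemma pi_binary_ae (p : ℝ) {n : ℕ} [NeZero n] :
    ∀ᵐ ξ ∂(Measure.pi fun _ : Fin n => bernMeasure p), ∀ i, ξ i = 0 ∨ ξ i = 1 :=
  Filter.eventually_all.2 fun i =>
  (Measure.tendsto_eval_ae_ae (μ := fun _ : Fin n => bernMeasure p) (i := i)).eventually (bern_ae p)
section GHelp
open MeasureTheory ProbabilityTheory Function

lemma u_integral {n : ℕ} [NeZero n] (g : Fin n → ℝ) :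
    ∫ j, g j ∂(PMF.uniformOfFintype (Fin n)).toMeasure = (n : ℝ)⁻¹ * ∑ j, g j := by
  rw [PMF.integral_eq_sum]
  simp only [PMF.uniformOfFintype_apply, Fintype.card_fin, smul_eq_mul, ENNReal.toReal_inv,
    ENNReal.toReal_natCast]
  rw [Finset.mul_sum]

variable {n : ℕ} [NeZero n] {p : ℝ}

lemma nu_ae :
    ∀ᵐ y ∂((Measure.pi fun _ : Fin n => bernMeasure p).prod
        (PMF.uniformOfFintype (Fin n)).toMeasure), ∀ i, y.1 i = 0 ∨ y.1 i = 1 :=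
  ae_fst_of (pi_binary_ae p)

lemma G1 (hp0 : 0 < p) (hp1 : p < 1) (x : Fin n → ℝ) :
    ∫ y : (Fin n → ℝ) × Fin n, (y.1 y.2 - x y.2)
        ∂((Measure.pi fun _ : Fin n => bernMeasure p).prod
          (PMF.uniformOfFintype (Fin n)).toMeasure)
      = -(1 / (n : ℝ)) * ∑ i, (x i - p) := by
  haveI : IsProbabilityMeasure (bernMeasure p) := bern_isProb hp0.le hp1.le
  set S : ℝ := ∑ i, |x i| with hS
  have hxb : ∀ j, |x j| ≤ S := fun j =>
    Finset.single_le_sum (f := fun i => |x i|) (fun i _ => abs_nonneg _) (Finset.mem_univ j)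
  have hmeas : Measurable fun y : (Fin n → ℝ) × Fin n => y.1 y.2 - x y.2 :=
    (meas_apply measurable_fst measurable_snd).sub (meas_apply measurable_const measurable_snd)
  have hint : Integrable (fun y : (Fin n → ℝ) × Fin n => y.1 y.2 - x y.2)
      ((Measure.pi fun _ : Fin n => bernMeasure p).prod
        (PMF.uniformOfFintype (Fin n)).toMeasure) := by
    refine Integrable.mono' (integrable_const (1 + S)) hmeas.aestronglyMeasurable ?_
    filter_upwards [nu_ae] with y hy
    rw [Real.norm_eq_abs]
    refine (abs_sub _ _).trans (add_le_add ?_ (hxb _))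
    rcases hy y.2 with h | h <;> rw [h] <;> norm_num
  rw [integral_prod _ hint]
  have hin : ∀ ξ' : Fin n → ℝ, (∫ j, (ξ' j - x j) ∂(PMF.uniformOfFintype (Fin n)).toMeasure)
      = (n : ℝ)⁻¹ * ∑ j, (ξ' j - x j) := fun ξ' => u_integral _
  simp_rw [hin]
  have hgint : ∀ j : Fin n, Integrable (fun t : ℝ => t - x j) (bernMeasure p) :=
    fun j => bern_integrable hp0.le hp1.le (measurable_id.sub measurable_const)
  rw [integral_const_mul, integral_finset_sum _
    (fun j _ => (pi_eval (bernMeasure p) (hgint j) j).1)]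
  have hev : ∀ j : Fin n, (∫ ξ' : Fin n → ℝ, (ξ' j - x j)
      ∂(Measure.pi fun _ : Fin n => bernMeasure p)) = p - x j := by
    intro j
    rw [(pi_eval (bernMeasure p) (hgint j) j).2,
      bern_integral hp0 hp1 (g := fun t => t - x j) (measurable_id.sub measurable_const)]
    ring
  simp_rw [hev]
  simp only [Finset.sum_sub_distrib, Finset.sum_const, Finset.card_univ, Fintype.card_fin,
    nsmul_eq_mul]
  ring
end GHelp
section G2Help
open MeasureTheory ProbabilityTheory Function

variable {n : ℕ} [NeZero n] {p : ℝ}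

lemma G2 (hn : 3 ≤ n) (hp0 : 0 < p) (hp1 : p < 1) (x : Fin n → ℝ) :
    ∫ y : (Fin n → ℝ) × Fin n, ((y.1 y.2 - x y.2) * (x (y.2 + 1) + x (y.2 - 1)))
        ∂((Measure.pi fun _ : Fin n => bernMeasure p).prod
          (PMF.uniformOfFintype (Fin n)).toMeasure)
      = -(2 / (n : ℝ)) * ∑ i : Fin n, (x i * x (i + 1) - p ^ 2)
          + (2 * p / (n : ℝ)) * ∑ i, (x i - p) := by
  haveI : IsProbabilityMeasure (bernMeasure p) := bern_isProb hp0.le hp1.le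
  set S : ℝ := ∑ i, |x i| with hS
  have hS0 : 0 ≤ S := Finset.sum_nonneg fun i _ => abs_nonneg _
  have hxb : ∀ j, |x j| ≤ S := fun j =>
    Finset.single_le_sum (f := fun i => |x i|) (fun i _ => abs_nonneg _) (Finset.mem_univ j)
  have hmeas : Measurable fun y : (Fin n → ℝ) × Fin n =>
      (y.1 y.2 - x y.2) * (x (y.2 + 1) + x (y.2 - 1)) := by
    refine ((meas_apply measurable_fst measurable_snd).sub
      (meas_apply measurable_const measurable_snd)).mul ?_
    exact (meas_apply measurable_const
        ((measurable_from_top (f := fun j : Fin n => j + 1)).comp measurable_snd)).add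
      (meas_apply measurable_const
        ((measurable_from_top (f := fun j : Fin n => j - 1)).comp measurable_snd))
  have hint : Integrable (fun y : (Fin n → ℝ) × Fin n =>
      (y.1 y.2 - x y.2) * (x (y.2 + 1) + x (y.2 - 1)))
      ((Measure.pi fun _ : Fin n => bernMeasure p).prod
        (PMF.uniformOfFintype (Fin n)).toMeasure) := by
    refine Integrable.mono' (integrable_const ((1 + S) * (S + S)))
      hmeas.aestronglyMeasurable ?_
    filter_upwards [nu_ae] with y hy
    rw [Real.norm_eq_abs, abs_mul]
    refine mul_le_mul ?_ ((abs_add_le _ _).trans (add_le_add (hxb _) (hxb _)))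
      (abs_nonneg _) (by linarith)
    refine (abs_sub _ _).trans (add_le_add ?_ (hxb _))
    rcases hy y.2 with h | h <;> rw [h] <;> norm_num
  rw [integral_prod _ hint]
  have hin : ∀ ξ' : Fin n → ℝ,
      (∫ j, ((ξ' j - x j) * (x (j + 1) + x (j - 1)))
        ∂(PMF.uniformOfFintype (Fin n)).toMeasure)
      = (n : ℝ)⁻¹ * ∑ j, (ξ' j - x j) * (x (j + 1) + x (j - 1)) := fun ξ' => u_integral _
  simp_rw [hin]
  have hgint : ∀ j : Fin n, Integrable (fun t : ℝ => (t - x j) * (x (j + 1) + x (j - 1)))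
      (bernMeasure p) := fun j => bern_integrable hp0.le hp1.le
    ((measurable_id.sub measurable_const).mul measurable_const)
  rw [integral_const_mul, integral_finset_sum _
    (fun j _ => (pi_eval (bernMeasure p) (hgint j) j).1)]
  have hev : ∀ j : Fin n, (∫ ξ' : Fin n → ℝ, ((ξ' j - x j) * (x (j + 1) + x (j - 1)))
      ∂(Measure.pi fun _ : Fin n => bernMeasure p))
      = (p - x j) * (x (j + 1) + x (j - 1)) := by
    intro j
    rw [(pi_eval (bernMeasure p) (hgint j) j).2,
      bern_integral hp0 hp1 (g := fun t => (t - x j) * (x (j + 1) + x (j - 1)))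
        ((measurable_id.sub measurable_const).mul measurable_const)]
    ring
  simp_rw [hev]
  -- now pure algebra with cyclic reindexing
  have s1 : ∑ j : Fin n, x (j + 1) = ∑ j : Fin n, x j :=
    Fintype.sum_equiv (Equiv.addRight 1) _ _ (fun i => by simp [Equiv.coe_addRight])
  have s2 : ∑ j : Fin n, x (j - 1) = ∑ j : Fin n, x j :=
    Fintype.sum_equiv (Equiv.subRight 1) _ _ (fun i => by simp [Equiv.subRight_apply])
  have s3 : ∑ j : Fin n, x (j + 1) * x j = ∑ j : Fin n, x j * x (j - 1) :=
    Fintype.sum_equiv (Equiv.addRight 1) _ _ (fun i => by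
      simp [Equiv.coe_addRight, add_sub_cancel_right])
  have s4 : ∑ j : Fin n, x j * x (j - 1) = ∑ j : Fin n, x j * x (j + 1) := by
    rw [← s3]; exact Finset.sum_congr rfl fun j _ => mul_comm _ _
  have expand : ∀ j : Fin n, (p - x j) * (x (j + 1) + x (j - 1))
      = (p * x (j + 1) - x j * x (j + 1)) + (p * x (j - 1) - x j * x (j - 1)) := fun j => by ring
  simp_rw [expand]
  rw [Finset.sum_add_distrib, Finset.sum_sub_distrib, Finset.sum_sub_distrib,
    ← Finset.mul_sum, ← Finset.mul_sum, s1, s2, s4]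
  simp only [Finset.sum_sub_distrib, Finset.sum_const, Finset.card_univ, Fintype.card_fin,
    nsmul_eq_mul]
  have hn0 : (n : ℝ) ≠ 0 := Nat.cast_ne_zero.mpr (NeZero.ne n)
  field_simp
  ring
end G2Help

end Helpers

/-- single-site resampling for runs. With `ξ = ω.1`, uniform index `I = ω.2.2`,
and `ξ' = Function.update ξ I (ω.2.1 I)` (one coordinate replaced by an independent copy),
`V₁(f) = ∑ (f i - p)` and `V₂(f) = ∑ (f i f_{i+1} - p²)` (cyclic convention), we have
`E[V₁' - V₁ | ξ] = -(1/n) V₁` and `E[V₂' - V₂ | ξ] = -(2/n) V₂ + (2p/n) V₁`. -/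

theorem runs_resampling_regression
    (n : ℕ) [NeZero n] (hn : 3 ≤ n) (p : ℝ) (hp0 : 0 < p) (hp1 : p < 1) :
    ((resampleMeasure n p)[(fun ω : (Fin n → ℝ) × (Fin n → ℝ) × Fin n =>
          (∑ i, (Function.update ω.1 ω.2.2 (ω.2.1 ω.2.2) i - p)) - ∑ i, (ω.1 i - p))
        | MeasurableSpace.comap (Prod.fst : (Fin n → ℝ) × (Fin n → ℝ) × Fin n → (Fin n → ℝ))
            inferInstance]
      =ᵐ[resampleMeasure n p] fun ω => -(1 / (n : ℝ)) * ∑ i, (ω.1 i - p)) ∧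
    ((resampleMeasure n p)[(fun ω : (Fin n → ℝ) × (Fin n → ℝ) × Fin n =>
          (∑ i : Fin n, (Function.update ω.1 ω.2.2 (ω.2.1 ω.2.2) i *
              Function.update ω.1 ω.2.2 (ω.2.1 ω.2.2) (i + 1) - p ^ 2))
            - ∑ i : Fin n, (ω.1 i * ω.1 (i + 1) - p ^ 2))
        | MeasurableSpace.comap (Prod.fst : (Fin n → ℝ) × (Fin n → ℝ) × Fin n → (Fin n → ℝ))
            inferInstance]
      =ᵐ[resampleMeasure n p] fun ω =>
        -(2 / (n : ℝ)) * ∑ i : Fin n, (ω.1 i * ω.1 (i + 1) - p ^ 2)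
          + (2 * p / (n : ℝ)) * ∑ i, (ω.1 i - p)) := by
  classical
  haveI hb : IsProbabilityMeasure (bernMeasure p) := bern_isProb hp0.le hp1.le
  have hPd : resampleMeasure n p
      = (Measure.pi fun _ : Fin n => bernMeasure p).prod
        ((Measure.pi fun _ : Fin n => bernMeasure p).prod
          (PMF.uniformOfFintype (Fin n)).toMeasure) := rfl
  have hf1eq : (fun ω : (Fin n → ℝ) × (Fin n → ℝ) × Fin n =>
        (∑ i, (Function.update ω.1 ω.2.2 (ω.2.1 ω.2.2) i - p)) - ∑ i, (ω.1 i - p))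
      = fun ω => ω.2.1 ω.2.2 - ω.1 ω.2.2 :=
    funext fun ω => key1 p ω.1 (ω.2.1 ω.2.2) ω.2.2
  have hf2eq : (fun ω : (Fin n → ℝ) × (Fin n → ℝ) × Fin n =>
        (∑ i : Fin n, (Function.update ω.1 ω.2.2 (ω.2.1 ω.2.2) i *
            Function.update ω.1 ω.2.2 (ω.2.1 ω.2.2) (i + 1) - p ^ 2))
          - ∑ i : Fin n, (ω.1 i * ω.1 (i + 1) - p ^ 2))
      = fun ω => (ω.2.1 ω.2.2 - ω.1 ω.2.2) * (ω.1 (ω.2.2 + 1) + ω.1 (ω.2.2 - 1)) :=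
    funext fun ω => key2 hn p ω.1 (ω.2.1 ω.2.2) ω.2.2
  have m1 : Measurable fun ω : (Fin n → ℝ) × (Fin n → ℝ) × Fin n => ω.1 ω.2.2 :=
    meas_apply measurable_fst (measurable_snd.comp measurable_snd)
  have m2 : Measurable fun ω : (Fin n → ℝ) × (Fin n → ℝ) × Fin n => ω.2.1 ω.2.2 :=
    meas_apply (measurable_fst.comp measurable_snd) (measurable_snd.comp measurable_snd)
  have m3 : Measurable fun ω : (Fin n → ℝ) × (Fin n → ℝ) × Fin n => ω.1 (ω.2.2 + 1) :=
    meas_apply measurable_fst ((measurable_from_top (f := fun j : Fin n => j + 1)).comp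
      (measurable_snd.comp measurable_snd))
  have m4 : Measurable fun ω : (Fin n → ℝ) × (Fin n → ℝ) × Fin n => ω.1 (ω.2.2 - 1) :=
    meas_apply measurable_fst ((measurable_from_top (f := fun j : Fin n => j - 1)).comp
      (measurable_snd.comp measurable_snd))
  have hP1 : ∀ᵐ ω ∂resampleMeasure n p, ∀ i, ω.1 i = 0 ∨ ω.1 i = 1 := by
    rw [hPd]; exact ae_fst_of (pi_binary_ae p)
  have hP2 : ∀ᵐ ω ∂resampleMeasure n p, ∀ i, ω.2.1 i = 0 ∨ ω.2.1 i = 1 := by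
    rw [hPd]; exact ae_snd_of (ae_fst_of (pi_binary_ae p))
  haveI hPP : IsProbabilityMeasure (resampleMeasure n p) := by
    rw [hPd]; infer_instance
  have habs2 : ∀ a b : ℝ, (a = 0 ∨ a = 1) → (b = 0 ∨ b = 1) → |a - b| ≤ 2 := by
    rintro a b (rfl | rfl) (rfl | rfl) <;> norm_num
  have hint1 : Integrable (fun ω : (Fin n → ℝ) × (Fin n → ℝ) × Fin n =>
      ω.2.1 ω.2.2 - ω.1 ω.2.2) (resampleMeasure n p) := by
    refine Integrable.mono' (integrable_const 2) (m2.sub m1).aestronglyMeasurable ?_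
    filter_upwards [hP1, hP2] with ω h1 h2
    rw [Real.norm_eq_abs]
    exact habs2 _ _ (h2 ω.2.2) (h1 ω.2.2)
  have hint2 : Integrable (fun ω : (Fin n → ℝ) × (Fin n → ℝ) × Fin n =>
      (ω.2.1 ω.2.2 - ω.1 ω.2.2) * (ω.1 (ω.2.2 + 1) + ω.1 (ω.2.2 - 1)))
      (resampleMeasure n p) := by
    refine Integrable.mono' (integrable_const 4)
      ((m2.sub m1).mul (m3.add m4)).aestronglyMeasurable ?_
    filter_upwards [hP1, hP2] with ω h1 h2
    rw [Real.norm_eq_abs, abs_mul]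
    have hb2 : |ω.1 (ω.2.2 + 1) + ω.1 (ω.2.2 - 1)| ≤ 2 := by
      rcases h1 (ω.2.2 + 1) with h | h <;> rcases h1 (ω.2.2 - 1) with h' | h' <;>
        rw [h, h'] <;> norm_num
    calc |ω.2.1 ω.2.2 - ω.1 ω.2.2| * |ω.1 (ω.2.2 + 1) + ω.1 (ω.2.2 - 1)|
        ≤ 2 * 2 := mul_le_mul (habs2 _ _ (h2 ω.2.2) (h1 ω.2.2)) hb2 (abs_nonneg _) (by norm_num)
      _ = 4 := by norm_num
  constructor
  · rw [hf1eq, hPd]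
    rw [hPd] at hint1
    refine (condexp_fst _ _ (m2.sub m1).stronglyMeasurable hint1).trans ?_
    exact Filter.Eventually.of_forall fun ω => G1 hp0 hp1 ω.1
  · rw [hf2eq, hPd]
    rw [hPd] at hint2
    refine (condexp_fst _ _ ((m2.sub m1).mul (m3.add m4)).stronglyMeasurable hint2).trans ?_
    exact Filter.Eventually.of_forall fun ω => G2 hn hp0 hp1 ω.1
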